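/- If |K₂/(2K₁)| ≤ 1 and α = arccos(−K₂/(2K₁)), then Θ₅* = (0, 2α, α) and Θ₆* = (0, 2π−2α, 2π−α) are critical points of the three-oscillator Kuramoto system: the right-hand sides θᵢ' all vanish at these points. -/

import Mathlib

open Real

/-- Right-hand side of the three-oscillator Kuramoto system. -/
noncomputable def kuramotoRHS (K₁ K₂ : ℝ) (Θ : ℝ × ℝ × ℝ) : ℝ × ℝ × ℝ :=
  (K₂/3 * sin (Θ.2.2 - Θ.1) + K₁/3 * sin (Θ.2.1 - Θ.1),
   K₂/3 * sin (Θ.2.2 - Θ.2.1) + K₁/3 * sin (Θ.1 - Θ.2.1),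
   K₂/3 * sin (Θ.1 - Θ.2.2) + K₂/3 * sin (Θ.2.1 - Θ.2.2))

theorem stmt4 (K₁ K₂ : ℝ) (hK₁ : K₁ ≠ 0) (hK₂ : K₂ ≠ 0)
    (h : |K₂ / (2 * K₁)| ≤ 1) (α : ℝ) (hα : α = arccos (-(K₂ / (2 * K₁)))) :
    kuramotoRHS K₁ K₂ (0, 2 * α, α) = 0 ∧
    kuramotoRHS K₁ K₂ (0, 2 * π - 2 * α, 2 * π - α) = 0 := by
  obtain ⟨h1, h2⟩ := abs_le.mp h
  have hcos : cos α = -(K₂ / (2 * K₁)) := by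
    rw [hα]; exact Real.cos_arccos (by linarith) (by linarith)
  have hK2 : K₂ = -(2 * K₁ * cos α) := by
    rw [hcos]; field_simp <;> ring
  constructor <;>
  · simp only [kuramotoRHS, Prod.mk.injEq, Prod.ext_iff]
    refine ⟨?_, ?_, ?_⟩ <;>
    · rw [hK2]
      simp [sub_eq_add_neg, sin_add, cos_add, sin_two_mul, cos_two_mul,
        Real.sin_two_pi, Real.cos_two_pi]
      ring
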